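/- Let x* ∈ ℝⁿ, x ≠ x*, and let E = [r, e₁, …, e_{n-1}] be an invertible n×n matrix whose first column is r = (x - x*)/‖x - x*‖. Let D = diag(λ_r, 1, …, 1) with 0 ≤ λ_r ≤ 1 and set M = E D E⁻¹. Suppose f ∈ ℝⁿ satisfies [E⁻¹f]₁ ≥ 0 (the coefficient of f along r in the basis E is nonnegative), and suppose P is symmetric positive definite with (∇V(x))ᵀ f < 0 where V(x) = (x - x*)ᵀP(x - x*). Then (∇V(x))ᵀ (M f) < 0. -/

import Mathlib

open Matrix

/-- Modulating a Lyapunov-decreasing velocity by `M = E D E⁻¹`, where the first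
column of `E` is the radial direction `r = (x - x*)/‖x - x*‖` and
`D = diag(λ_r, 1, …, 1)` with `0 ≤ λ_r ≤ 1`, preserves strict Lyapunov decrease
whenever the velocity has nonnegative component along `r`. -/
theorem modulated_velocity_lyapunov_decrease {n : ℕ} [NeZero n]
    (P E : Matrix (Fin n) (Fin n) ℝ) (hP : P.PosDef)
    (xs x f : Fin n → ℝ) (hx : x ≠ xs)
    (r : Fin n → ℝ)
    (hr : r = (Real.sqrt ((x - xs) ⬝ᵥ (x - xs)))⁻¹ • (x - xs))
    (hE : IsUnit E.det) (hcol : ∀ j, E j 0 = r j)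
    (l : ℝ) (hl0 : 0 ≤ l) (hl1 : l ≤ 1)
    (M : Matrix (Fin n) (Fin n) ℝ)
    (hM : M = E * Matrix.diagonal (fun i => if i = 0 then l else 1) * E⁻¹)
    (hf1 : 0 ≤ (E⁻¹.mulVec f) 0)
    (hV : ((2 : ℝ) • P.mulVec (x - xs)) ⬝ᵥ f < 0) :
    ((2 : ℝ) • P.mulVec (x - xs)) ⬝ᵥ (M.mulVec f) < 0 := by
  set d : Fin n → ℝ := x - xs with hd
  have hdne : d ≠ 0 := sub_ne_zero.mpr hx
  set c : Fin n → ℝ := E⁻¹.mulVec f with hc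
  set g : Fin n → ℝ := (2 : ℝ) • P.mulVec d with hg
  have hEc : E.mulVec c = f := by
    rw [hc, Matrix.mulVec_mulVec, Matrix.mul_nonsing_inv E hE, Matrix.one_mulVec]
  -- M f = f - ((1-l) * c 0) • r
  have hDc : (Matrix.diagonal (fun i : Fin n => if i = 0 then l else 1)).mulVec c
      = c - ((1 - l) * c 0) • ((Pi.single 0 1 : Fin n → ℝ)) := by
    funext i
    simp only [Matrix.mulVec_diagonal, Pi.sub_apply, Pi.smul_apply, smul_eq_mul,
      Pi.single_apply]
    by_cases h : i = 0
    · subst h; simp; ring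
    · simp [h]
  have hEsingle : E.mulVec ((Pi.single 0 1 : Fin n → ℝ)) = r := by
    funext j
    simp only [Matrix.mulVec, dotProduct, Pi.single_apply]
    rw [Finset.sum_eq_single 0]
    · simpa using hcol j
    · intro b _ hb; simp [hb]
    · simp
  have key : M.mulVec f = f - ((1 - l) * c 0) • r := by
    rw [hM, ← Matrix.mulVec_mulVec, ← Matrix.mulVec_mulVec, ← hc, hDc,
      Matrix.mulVec_sub, hEc, Matrix.mulVec_smul, hEsingle]
  -- g ⬝ᵥ r > 0
  have hdd : (0:ℝ) < d ⬝ᵥ d := by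
    rcases lt_or_eq_of_le (Finset.sum_nonneg (fun i _ => mul_self_nonneg (d i))) with h | h
    · exact h
    · exact absurd (dotProduct_self_eq_zero.mp h.symm) hdne
  have ht : (0:ℝ) < Real.sqrt (d ⬝ᵥ d) := Real.sqrt_pos.mpr hdd
  have hPd : (0:ℝ) < d ⬝ᵥ P.mulVec d := by
    have := hP.dotProduct_mulVec_pos hdne
    simpa using this
  have hgr : (0:ℝ) < g ⬝ᵥ r := by
    rw [hg, hr, smul_dotProduct, dotProduct_smul]
    have : P.mulVec d ⬝ᵥ d = d ⬝ᵥ P.mulVec d := dotProduct_comm _ _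
    rw [smul_eq_mul, smul_eq_mul, this]
    positivity
  have hs : 0 ≤ (1 - l) * c 0 := mul_nonneg (by linarith) hf1
  calc g ⬝ᵥ M.mulVec f = g ⬝ᵥ f - ((1 - l) * c 0) * (g ⬝ᵥ r) := by
        rw [key, dotProduct_sub, dotProduct_smul, smul_eq_mul]
      _ ≤ g ⬝ᵥ f := by nlinarith
      _ < 0 := hV
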